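/- arXiv:2003.01948 — 4 statements merged into one kernel-verified Lean document; each statement's English description precedes it below -/
import Mathlib

section
/- If α_m → α with |α_m − α| ≤ κ·β^m for κ > 0 and β ∈ (0,1), then δ²·∑_{m=0}^∞ (1-δ)^{2m} α_m² = (α²/2)·δ + O(δ²) as δ → 0. -/
theorem weighted_geometric_square_series_big_O
    (α : ℕ → ℝ) (hα : ∀ m, α m ∈ Set.Ioo (0:ℝ) 1)
    (a κ β : ℝ) (hκ : 0 < κ) (hβ : β ∈ Set.Ioo (0:ℝ) 1)
    (hgeo : ∀ m, |α m - a| ≤ κ * β ^ m) :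
    ∃ C : ℝ, ∀ δ ∈ Set.Ioo (0:ℝ) 1,
      |δ ^ 2 * ∑' m : ℕ, (1 - δ) ^ (2 * m) * (α m) ^ 2 - a ^ 2 / 2 * δ| ≤ C * δ ^ 2 := by
  obtain ⟨hβ0, hβ1⟩ := hβ
  have hK : (0:ℝ) ≤ κ * (1 + |a|) := by positivity
  refine ⟨a ^ 2 / 2 + κ * (1 + |a|) / (1 - β), ?_⟩
  rintro δ ⟨hδ0, hδ1⟩
  set r : ℝ := (1 - δ) ^ 2 with hrdef
  have hr0 : 0 ≤ r := sq_nonneg _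
  have hr1 : r < 1 := by
    have h1 : 0 ≤ 1 - δ := by linarith
    nlinarith
  have h1r : 1 - r = δ * (2 - δ) := by rw [hrdef]; ring
  have h1rpos : 0 < 1 - r := by linarith
  -- bound on the error terms
  have hbound : ∀ m, |r ^ m * (α m ^ 2 - a ^ 2)| ≤ κ * (1 + |a|) * β ^ m := by
    intro m
    obtain ⟨hα0, hα1⟩ := hα m
    have hrm : r ^ m ≤ 1 := pow_le_one₀ hr0 hr1.le
    have h1 : |α m ^ 2 - a ^ 2| = |α m - a| * |α m + a| := by
      rw [← abs_mul]; ring_nf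
    have h2 : |α m + a| ≤ 1 + |a| := by
      calc |α m + a| ≤ |α m| + |a| := abs_add_le _ _
        _ ≤ 1 + |a| := by rw [abs_of_pos hα0]; linarith
    have h3 : |α m - a| * |α m + a| ≤ (κ * β ^ m) * (1 + |a|) := by
      apply mul_le_mul (hgeo m) h2 (abs_nonneg _)
      positivity
    calc |r ^ m * (α m ^ 2 - a ^ 2)| = |r ^ m| * |α m ^ 2 - a ^ 2| := abs_mul _ _
      _ ≤ 1 * ((κ * β ^ m) * (1 + |a|)) := by
          rw [h1]
          apply mul_le_mul _ h3 (by positivity) zero_le_one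
          rw [abs_of_nonneg (pow_nonneg hr0 m)]; exact hrm
      _ = κ * (1 + |a|) * β ^ m := by ring
  have hsumgeoβ : Summable (fun m : ℕ => κ * (1 + |a|) * β ^ m) :=
    (summable_geometric_of_lt_one hβ0.le hβ1).mul_left _
  have hsum2 : Summable (fun m : ℕ => r ^ m * (α m ^ 2 - a ^ 2)) :=
    Summable.of_abs (hsumgeoβ.of_nonneg_of_le (fun m => abs_nonneg _) hbound)
  have hsumgeor : Summable (fun m : ℕ => r ^ m) := summable_geometric_of_lt_one hr0 hr1
  have hsum1 : Summable (fun m : ℕ => r ^ m * a ^ 2) := hsumgeor.mul_right _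
  set T : ℝ := ∑' m : ℕ, r ^ m * (α m ^ 2 - a ^ 2) with hT
  have hTbound : |T| ≤ κ * (1 + |a|) / (1 - β) := by
    have h1 : |T| ≤ ∑' m : ℕ, κ * (1 + |a|) * β ^ m := by
      calc |T| ≤ ∑' m : ℕ, |r ^ m * (α m ^ 2 - a ^ 2)| := by
            have := norm_tsum_le_tsum_norm (f := fun m : ℕ => r ^ m * (α m ^ 2 - a ^ 2)) (by simpa only [Real.norm_eq_abs] using hsum2.abs)
            simpa only [Real.norm_eq_abs] using this
        _ ≤ ∑' m : ℕ, κ * (1 + |a|) * β ^ m :=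
            Summable.tsum_le_tsum hbound (hsum2.abs) hsumgeoβ
    calc |T| ≤ ∑' m : ℕ, κ * (1 + |a|) * β ^ m := h1
      _ = κ * (1 + |a|) * (1 - β)⁻¹ := by
          rw [tsum_mul_left, tsum_geometric_of_lt_one hβ0.le hβ1]
      _ = κ * (1 + |a|) / (1 - β) := by rw [div_eq_mul_inv]
  have hts : ∑' m : ℕ, (1 - δ) ^ (2 * m) * (α m) ^ 2
      = a ^ 2 * (1 - r)⁻¹ + T := by
    have h1 : ∀ m : ℕ, (1 - δ) ^ (2 * m) * (α m) ^ 2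
        = r ^ m * a ^ 2 + r ^ m * (α m ^ 2 - a ^ 2) := by
      intro m; rw [hrdef, ← pow_mul]; ring
    calc ∑' m : ℕ, (1 - δ) ^ (2 * m) * (α m) ^ 2
        = ∑' m : ℕ, (r ^ m * a ^ 2 + r ^ m * (α m ^ 2 - a ^ 2)) := by
          exact tsum_congr h1
      _ = (∑' m : ℕ, r ^ m * a ^ 2) + T := Summable.tsum_add hsum1 hsum2
      _ = a ^ 2 * (1 - r)⁻¹ + T := by
          rw [tsum_mul_right, tsum_geometric_of_lt_one hr0 hr1]; ring
  rw [hts]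
  have h2δ : (1:ℝ) ≤ 2 - δ := by linarith
  have h2δpos : (0:ℝ) < 2 - δ := by linarith
  have hmain : δ ^ 2 * (a ^ 2 * (1 - r)⁻¹ + T) - a ^ 2 / 2 * δ
      = a ^ 2 * δ ^ 2 / (2 * (2 - δ)) + δ ^ 2 * T := by
    rw [h1r]
    field_simp
    ring
  rw [hmain]
  have hb1 : |a ^ 2 * δ ^ 2 / (2 * (2 - δ))| ≤ a ^ 2 / 2 * δ ^ 2 := by
    rw [abs_of_nonneg (by positivity)]
    rw [div_le_iff₀ (by positivity)]
    nlinarith [mul_nonneg (sq_nonneg a) (sq_nonneg δ)]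
  have hb2 : |δ ^ 2 * T| ≤ κ * (1 + |a|) / (1 - β) * δ ^ 2 := by
    rw [abs_mul, abs_of_nonneg (sq_nonneg δ)]
    nlinarith [sq_nonneg δ, abs_nonneg T]
  calc |a ^ 2 * δ ^ 2 / (2 * (2 - δ)) + δ ^ 2 * T|
      ≤ |a ^ 2 * δ ^ 2 / (2 * (2 - δ))| + |δ ^ 2 * T| := abs_add_le _ _
    _ ≤ a ^ 2 / 2 * δ ^ 2 + κ * (1 + |a|) / (1 - β) * δ ^ 2 := add_le_add hb1 hb2
    _ = (a ^ 2 / 2 + κ * (1 + |a|) / (1 - β)) * δ ^ 2 := by ring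
end

section
/- If additionally |α_m − α| ≤ κβ^m with κ > 0, β ∈ (0,1), then E[s(δ)] = α·m_z + O(δ) as δ → 0. -/
open MeasureTheory ProbabilityTheory

theorem expectation_of_weighted_series_big_O
    {Ω : Type*} [MeasurableSpace Ω] (μ : Measure Ω) [IsProbabilityMeasure μ]
    (z : ℕ → Ω → ℝ) (hmeas : ∀ m, Measurable (z m))
    (hindep : iIndepFun z μ)
    (hident : ∀ m, Measure.map (z m) μ = Measure.map (z 0) μ)
    (hint : Integrable (z 0) μ)
    (α : ℕ → ℝ) (hα : ∀ m, α m ∈ Set.Ioo (0:ℝ) 1)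
    (a κ β : ℝ) (hκ : 0 < κ) (hβ : β ∈ Set.Ioo (0:ℝ) 1)
    (hgeo : ∀ m, |α m - a| ≤ κ * β ^ m) :
    ∃ C : ℝ, ∀ δ ∈ Set.Ioo (0:ℝ) 1,
      |(∫ ω, (∑' m : ℕ, δ * (1 - δ) ^ m * α m * z m ω) ∂μ)
        - a * ∫ ω, z 0 ω ∂μ| ≤ C * δ := by
  obtain ⟨hβ0, hβ1⟩ := hβ
  set I := ∫ ω, z 0 ω ∂μ with hI
  set N := ∫ ω, ‖z 0 ω‖ ∂μ with hN
  have hN0 : 0 ≤ N := integral_nonneg fun ω => norm_nonneg _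
  have hintm : ∀ m, Integrable (z m) μ := by
    intro m
    have h0 : Integrable id (μ.map (z 0)) := by
      rw [integrable_map_measure aestronglyMeasurable_id (hmeas 0).aemeasurable]
      simpa using hint
    have : Integrable id (μ.map (z m)) := by rw [hident m]; exact h0
    rw [integrable_map_measure aestronglyMeasurable_id (hmeas m).aemeasurable] at this
    simpa using this
  have hEz : ∀ m, ∫ ω, z m ω ∂μ = I := by
    intro m
    have h1 : ∫ x, id x ∂(μ.map (z m)) = ∫ ω, z m ω ∂μ :=
      integral_map (hmeas m).aemeasurable aestronglyMeasurable_id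
    have h2 : ∫ x, id x ∂(μ.map (z 0)) = ∫ ω, z 0 ω ∂μ :=
      integral_map (hmeas 0).aemeasurable aestronglyMeasurable_id
    rw [← h1, hident m, h2]
  have hEnorm : ∀ m, ∫ ω, ‖z m ω‖ ∂μ = N := by
    intro m
    have h1 : ∫ x, ‖x‖ ∂(μ.map (z m)) = ∫ ω, ‖z m ω‖ ∂μ :=
      integral_map (hmeas m).aemeasurable (continuous_norm.aestronglyMeasurable)
    have h2 : ∫ x, ‖x‖ ∂(μ.map (z 0)) = ∫ ω, ‖z 0 ω‖ ∂μ :=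
      integral_map (hmeas 0).aemeasurable (continuous_norm.aestronglyMeasurable)
    rw [← h1, hident m, h2]
  refine ⟨κ * |I| * (1 - β)⁻¹, ?_⟩
  rintro δ ⟨hδ0, hδ1⟩
  have h1δ0 : 0 ≤ 1 - δ := by linarith
  have h1δ1 : 1 - δ < 1 := by linarith
  set c : ℕ → ℝ := fun m => δ * (1 - δ) ^ m * α m with hc
  have hc0 : ∀ m, 0 ≤ c m := fun m =>
    mul_nonneg (mul_nonneg hδ0.le (pow_nonneg h1δ0 m)) (hα m).1.le
  have hcle : ∀ m, c m ≤ δ * (1 - δ) ^ m := by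
    intro m
    have := (hα m).2.le
    calc c m ≤ δ * (1 - δ) ^ m * 1 := by
          exact mul_le_mul_of_nonneg_left this (mul_nonneg hδ0.le (pow_nonneg h1δ0 m))
      _ = δ * (1 - δ) ^ m := by ring
  have hFint : ∀ m, Integrable (fun ω => c m * z m ω) μ := fun m => (hintm m).const_mul _
  have hFnorm : ∀ m, ∫ ω, ‖c m * z m ω‖ ∂μ = c m * N := by
    intro m
    have : ∀ ω, ‖c m * z m ω‖ = c m * ‖z m ω‖ := by
      intro ω; rw [norm_mul, Real.norm_eq_abs, abs_of_nonneg (hc0 m)]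
    simp_rw [this]
    rw [integral_const_mul, hEnorm m]
  have hsum_geo : Summable fun m : ℕ => (1 - δ) ^ m :=
    summable_geometric_of_lt_one h1δ0 h1δ1
  have hsummable : Summable fun m => ∫ ω, ‖c m * z m ω‖ ∂μ := by
    simp_rw [hFnorm]
    apply Summable.of_nonneg_of_le (fun m => mul_nonneg (hc0 m) hN0)
      (fun m => ?_) ((hsum_geo.mul_left δ).mul_right N)
    exact mul_le_mul_of_nonneg_right (hcle m) hN0
  have hHS : HasSum (fun m => ∫ ω, c m * z m ω ∂μ)
      (∫ ω, ∑' m, c m * z m ω ∂μ) :=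
    hasSum_integral_of_summable_integral_norm hFint hsummable
  have hEint : ∀ m, ∫ ω, c m * z m ω ∂μ = c m * I := by
    intro m; rw [integral_const_mul, hEz m]
  rw [funext hEint] at hHS
  -- a * I as a geometric sum
  have hgeoHS : HasSum (fun m : ℕ => (1 - δ) ^ m) (1 - (1 - δ))⁻¹ :=
    hasSum_geometric_of_lt_one h1δ0 h1δ1
  have hδne : δ ≠ 0 := ne_of_gt hδ0
  have hgeoHS1 : HasSum (fun m : ℕ => δ * (1 - δ) ^ m * (a * I)) (a * I) := by
    have := (hgeoHS.mul_left δ).mul_right (a * I)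
    have h : δ * (1 - (1 - δ))⁻¹ * (a * I) = a * I := by
      rw [sub_sub_cancel, mul_inv_cancel₀ hδne, one_mul]
    rwa [h] at this
  have hdiff : HasSum (fun m => c m * I - δ * (1 - δ) ^ m * (a * I))
      ((∫ ω, ∑' m, c m * z m ω ∂μ) - a * I) := hHS.sub hgeoHS1
  have hbound : ∀ m, ‖c m * I - δ * (1 - δ) ^ m * (a * I)‖
      ≤ δ * (κ * |I|) * β ^ m := by
    intro m
    have heq : c m * I - δ * (1 - δ) ^ m * (a * I)
        = δ * (1 - δ) ^ m * (α m - a) * I := by rw [hc]; ring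
    rw [heq, Real.norm_eq_abs, abs_mul, abs_mul, abs_mul,
      abs_of_nonneg hδ0.le, abs_of_nonneg (pow_nonneg h1δ0 m)]
    have h1 : (1 - δ) ^ m ≤ 1 := pow_le_one₀ h1δ0 h1δ1.le
    have h2 : |α m - a| ≤ κ * β ^ m := hgeo m
    calc δ * (1 - δ) ^ m * |α m - a| * |I|
        ≤ δ * 1 * (κ * β ^ m) * |I| := by
          apply mul_le_mul_of_nonneg_right _ (abs_nonneg _)
          apply mul_le_mul (mul_le_mul_of_nonneg_left h1 hδ0.le) h2 (abs_nonneg _)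
          positivity
      _ = δ * (κ * |I|) * β ^ m := by ring
  have hgHS : HasSum (fun m : ℕ => δ * (κ * |I|) * β ^ m)
      (δ * (κ * |I|) * (1 - β)⁻¹) := by
    have := (hasSum_geometric_of_lt_one hβ0.le hβ1).mul_left (δ * (κ * |I|))
    simpa using this
  have := tsum_of_norm_bounded hgHS hbound
  rw [hdiff.tsum_eq] at this
  calc |(∫ ω, ∑' m, c m * z m ω ∂μ) - a * I|
      ≤ δ * (κ * |I|) * (1 - β)⁻¹ := this
    _ = κ * |I| * (1 - β)⁻¹ * δ := by ring
end

section
/- Weak law of small step-sizes: under the setup of Lemma 1 with α_m → α geometrically fast, s(δ) = δ·∑_{m=0}^∞ (1-δ)^m α_m z_m converges in probability to α·m_z as δ → 0, i.e., for every ε > 0, P(|s(δ) − α·m_z| > ε) → 0 as δ → 0. -/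
open MeasureTheory ProbabilityTheory Filter Finset Topology
open scoped ENNReal NNReal

lemma summable_linear_mul_geometric {M r : ℝ} (hr : |r| < 1) {y : ℕ → ℝ}
    (hy : ∀ n, |y n| ≤ M * (n + 1)) : Summable (fun n => y n * r ^ n) := by
  have hA : Summable (fun n : ℕ => (n : ℝ) * |r| ^ n) := by
    simpa using summable_pow_mul_geometric_of_norm_lt_one 1 (r := |r|)
      (by simpa using hr)
  have hB : Summable (fun n : ℕ => |r| ^ n) :=
    summable_geometric_of_lt_one (abs_nonneg r) hr
  have h1 : Summable (fun n : ℕ => M * ((n : ℝ) + 1) * |r| ^ n) :=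
    ((hA.add hB).mul_left M).congr fun n => by ring
  refine Summable.of_norm_bounded h1 fun n => ?_
  have h0 : (0:ℝ) ≤ |r| ^ n := pow_nonneg (abs_nonneg r) n
  calc ‖y n * r ^ n‖ = |y n| * |r| ^ n := by
        rw [Real.norm_eq_abs, abs_mul, abs_pow]
    _ ≤ (M * ((n:ℝ) + 1)) * |r| ^ n := mul_le_mul_of_nonneg_right (hy n) h0

lemma cesaro_linear_bound {x : ℕ → ℝ} {L : ℝ}
    (h : Tendsto (fun n : ℕ => (∑ i ∈ range n, x i) / n) atTop (𝓝 L)) :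
    ∃ M : ℝ, 0 ≤ M ∧ ∀ n : ℕ, |∑ i ∈ range n, x i| ≤ M * n := by
  obtain ⟨M, hM⟩ := (h.abs).bddAbove_range
  simp only [upperBounds, Set.mem_range, forall_exists_index, Set.mem_setOf_eq] at hM
  have hM' : ∀ n : ℕ, |(∑ i ∈ range n, x i) / n| ≤ M := fun n => hM n rfl
  have hM0 : 0 ≤ M := le_trans (by simp) (hM' 0)
  refine ⟨M, hM0, fun n => ?_⟩
  cases n with
  | zero => simp
  | succ k =>
      have hpos : (0:ℝ) < ((k:ℝ) + 1) := by positivity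
      have hc : (((k+1:ℕ)):ℝ) = (k:ℝ) + 1 := by push_cast; ring
      have h1 := hM' (k + 1)
      rw [abs_div, hc, abs_of_pos hpos, div_le_iff₀ hpos] at h1
      rw [hc]
      exact h1

lemma cesaro_x_bound {x : ℕ → ℝ} {L : ℝ}
    (h : Tendsto (fun n : ℕ => (∑ i ∈ range n, x i) / n) atTop (𝓝 L)) :
    ∃ M : ℝ, 0 ≤ M ∧ ∀ n : ℕ, |x n| ≤ M * (n + 1) := by
  obtain ⟨M, hM0, hM⟩ := cesaro_linear_bound h
  refine ⟨2 * M, by linarith, fun n => ?_⟩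
  have h1 : x n = (∑ i ∈ range (n+1), x i) - ∑ i ∈ range n, x i := by
    rw [Finset.sum_range_succ]; ring
  have h2 := hM (n + 1)
  have h3 := hM n
  push_cast at h2
  calc |x n| ≤ |∑ i ∈ range (n+1), x i| + |∑ i ∈ range n, x i| := by
        rw [h1]; exact abs_sub _ _
    _ ≤ M * ((n:ℝ) + 1) + M * n := add_le_add h2 h3
    _ ≤ 2 * M * ((n:ℝ) + 1) := by nlinarith [Nat.cast_nonneg (α := ℝ) n]

set_option maxHeartbeats 1600000 in
lemma frobenius_abel_cesaro {x : ℕ → ℝ} {L : ℝ}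
    (h : Tendsto (fun n : ℕ => (∑ i ∈ range n, x i) / n) atTop (𝓝 L)) :
    Tendsto (fun δ : ℝ => δ * ∑' m, (1 - δ) ^ m * x m)
      (nhdsWithin 0 (Set.Ioo (0:ℝ) 1)) (𝓝 L) := by
  obtain ⟨M, hM0, hM⟩ := cesaro_linear_bound h
  set S : ℕ → ℝ := fun n => ∑ i ∈ range n, x i with hSdef
  have hc_tend : Tendsto (fun n : ℕ => S (n+1) / ((n:ℝ)+1)) atTop (𝓝 L) := by
    have h2 := h.comp (tendsto_add_atTop_nat 1)
    apply h2.congr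
    intro n
    simp only [Function.comp_apply, hSdef]
    push_cast
    ring
  set d : ℕ → ℝ := fun n => S (n+1) / ((n:ℝ)+1) - L with hddef
  have hd_tend : Tendsto d atTop (𝓝 0) := by
    simpa using hc_tend.sub_const L
  have hSd : ∀ n : ℕ, S (n+1) = ((n:ℝ)+1) * L + ((n:ℝ)+1) * d n := by
    intro n
    have hne : ((n:ℝ)+1) ≠ 0 := by positivity
    have : ((n:ℝ)+1) * (S (n+1) / ((n:ℝ)+1)) = S (n+1) := by field_simp
    simp only [hddef]
    linear_combination -this
  have hd_bd : ∀ n, |d n| ≤ M + |L| := by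
    intro n
    have hpos : (0:ℝ) < (n:ℝ)+1 := by positivity
    have h1 : |S (n+1) / ((n:ℝ)+1)| ≤ M := by
      rw [abs_div, abs_of_pos hpos, div_le_iff₀ hpos]
      have := hM (n+1); push_cast at this; linarith
    calc |d n| ≤ |S (n+1) / ((n:ℝ)+1)| + |L| := by
          rw [hddef]; exact abs_sub _ _
      _ ≤ M + |L| := by linarith
  clear_value S d
  rw [Metric.tendsto_nhdsWithin_nhds]
  intro ε hε
  obtain ⟨N, hN⟩ := (Metric.tendsto_atTop.mp hd_tend) (ε/2) (by positivity)
  set K : ℝ := ∑ n ∈ range N, (((n:ℝ)+1) * (M + |L|)) with hKdef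
  have hK0 : 0 ≤ K := by
    apply Finset.sum_nonneg
    intro n _
    have : (0:ℝ) ≤ (n:ℝ)+1 := by positivity
    positivity
  clear_value K
  refine ⟨min 1 (ε/(2*(K+1))), by positivity, ?_⟩
  intro δ hδ hdist
  obtain ⟨hδ0, hδ1⟩ := hδ
  have hδsmall : δ < ε/(2*(K+1)) := by
    have : |δ| < min 1 (ε/(2*(K+1))) := by simpa [Real.dist_eq] using hdist
    have h2 := lt_of_le_of_lt (le_abs_self δ) this
    exact lt_of_lt_of_le h2 (min_le_right _ _)
  set r : ℝ := 1 - δ with hrdef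
  have hr0 : 0 ≤ r := by simp [hrdef]; linarith
  have hr1 : r < 1 := by simp [hrdef]; linarith
  have hrabs : |r| < 1 := by rw [abs_of_nonneg hr0]; exact hr1
  clear_value r
  -- summabilities
  have hsum_S1 : Summable (fun n => S (n+1) * r ^ n) := by
    refine summable_linear_mul_geometric hrabs (M := M) fun n => ?_
    rw [hSdef]
    have := hM (n+1); push_cast at this; linarith
  have hsum_S0 : Summable (fun n => S n * r ^ n) := by
    refine summable_linear_mul_geometric hrabs (M := M) fun n => ?_
    rw [hSdef]
    have := hM n
    have hn : (n:ℝ) ≤ (n:ℝ) + 1 := by linarith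
    nlinarith [Nat.cast_nonneg (α := ℝ) n]
  have hsum_w : Summable (fun n : ℕ => ((n:ℝ)+1) * r ^ n) := by
    refine summable_linear_mul_geometric hrabs (M := 1) fun n => ?_
    rw [abs_of_nonneg (by positivity : (0:ℝ) ≤ (n:ℝ)+1)]; linarith
  have hsum_wd : Summable (fun n : ℕ => (((n:ℝ)+1) * d n) * r ^ n) := by
    refine summable_linear_mul_geometric hrabs (M := M + |L|) fun n => ?_
    rw [abs_mul, abs_of_nonneg (by positivity : (0:ℝ) ≤ (n:ℝ)+1)]
    have := hd_bd n
    nlinarith [Nat.cast_nonneg (α := ℝ) n, abs_nonneg (d n)]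
  have hsum_wabs : Summable (fun n : ℕ => (((n:ℝ)+1) * |d n|) * r ^ n) := by
    refine summable_linear_mul_geometric hrabs (M := M + |L|) fun n => ?_
    rw [abs_mul, abs_of_nonneg (by positivity : (0:ℝ) ≤ (n:ℝ)+1), abs_abs]
    have := hd_bd n
    nlinarith [Nat.cast_nonneg (α := ℝ) n, abs_nonneg (d n)]
  have hsum_n : Summable (fun n : ℕ => (n:ℝ) * r ^ n) := by
    simpa using summable_pow_mul_geometric_of_norm_lt_one 1 (r := r)
      (by rwa [Real.norm_eq_abs])
  have hsum_geo : Summable (fun n : ℕ => r ^ n) :=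
    summable_geometric_of_lt_one hr0 hr1
  -- identity A
  have hA : ∑' m, r ^ m * x m = δ * ∑' n : ℕ, S (n+1) * r ^ n := by
    have hxid : ∀ m : ℕ, r ^ m * x m = S (m+1) * r ^ m - S m * r ^ m := by
      intro m
      have hx : x m = S (m+1) - S m := by
        rw [hSdef]; simp only [Finset.sum_range_succ]; ring
      rw [hx]; ring
    calc ∑' m, r ^ m * x m = ∑' m, (S (m+1) * r ^ m - S m * r ^ m) :=
          tsum_congr hxid
      _ = (∑' n : ℕ, S (n+1) * r ^ n) - ∑' n : ℕ, S n * r ^ n := Summable.tsum_sub hsum_S1 hsum_S0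
      _ = (∑' n : ℕ, S (n+1) * r ^ n) - r * ∑' n : ℕ, S (n+1) * r ^ n := by
          congr 1
          rw [Summable.tsum_eq_zero_add hsum_S0]
          have h0 : S 0 * r ^ 0 = 0 := by rw [hSdef]; simp
          rw [h0, zero_add]
          rw [show (fun n : ℕ => S (n+1) * r ^ (n+1)) = fun n : ℕ => r * (S (n+1) * r ^ n)
            from funext fun n => by ring, tsum_mul_left]
      _ = δ * ∑' n : ℕ, S (n+1) * r ^ n := by rw [hrdef]; ring
  -- identity B
  have hB : ∑' n : ℕ, S (n+1) * r ^ n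
      = L * ∑' n : ℕ, (((n:ℝ)+1) * r ^ n) + ∑' n : ℕ, ((((n:ℝ)+1) * d n) * r ^ n) := by
    rw [← tsum_mul_left, ← Summable.tsum_add (hsum_w.mul_left L) hsum_wd]
    exact tsum_congr fun n => by rw [hSd n]; ring
  -- value of the weight sum
  have hδne : δ ≠ 0 := ne_of_gt hδ0
  have hW : ∑' n : ℕ, (((n:ℝ)+1) * r ^ n) = δ⁻¹ * δ⁻¹ := by
    have h1 : ∑' n : ℕ, (n:ℝ) * r ^ n = r / (1-r)^2 :=
      tsum_coe_mul_geometric_of_norm_lt_one (by rwa [Real.norm_eq_abs])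
    have h2 : ∑' n : ℕ, r ^ n = (1-r)⁻¹ := tsum_geometric_of_lt_one hr0 hr1
    have hsplit : (fun n : ℕ => ((n:ℝ)+1) * r ^ n)
        = fun n : ℕ => (n:ℝ) * r ^ n + r ^ n := funext fun n => by ring
    rw [hsplit, Summable.tsum_add hsum_n hsum_geo, h1, h2]
    have h1r : 1 - r = δ := by rw [hrdef]; ring
    rw [h1r]
    field_simp
    rw [hrdef]; ring
  set Wd : ℝ := ∑' n : ℕ, ((((n:ℝ)+1) * d n) * r ^ n) with hWddef
  set Wa : ℝ := ∑' n : ℕ, ((((n:ℝ)+1) * |d n|) * r ^ n) with hWadef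
  clear_value Wd Wa
  have key : δ * ∑' m, r ^ m * x m - L = δ^2 * Wd := by
    rw [hA, hB, hW, hWddef]
    field_simp
    ring
  -- |Wd| ≤ Wa
  have hnorm_eq : ∀ n : ℕ, ‖(((n:ℝ)+1) * d n) * r ^ n‖ = (((n:ℝ)+1) * |d n|) * r ^ n := by
    intro n
    rw [Real.norm_eq_abs, abs_mul, abs_mul, abs_pow, abs_of_nonneg hr0,
      abs_of_nonneg (by positivity : (0:ℝ) ≤ (n:ℝ)+1)]
  have habs : |Wd| ≤ Wa := by
    have h1 := norm_tsum_le_tsum_norm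
      (f := fun n : ℕ => (((n:ℝ)+1) * d n) * r ^ n)
      (hsum_wabs.congr fun n => (hnorm_eq n).symm)
    rw [hWddef, hWadef]
    calc |∑' n : ℕ, ((((n:ℝ)+1) * d n) * r ^ n)| ≤ ∑' n : ℕ, ‖(((n:ℝ)+1) * d n) * r ^ n‖ := by
          simpa [Real.norm_eq_abs] using h1
      _ = ∑' n : ℕ, ((((n:ℝ)+1) * |d n|) * r ^ n) := tsum_congr hnorm_eq
  -- split Wa
  have hsplit := Summable.sum_add_tsum_nat_add N hsum_wabs
  have hhead : ∑ n ∈ range N, ((((n:ℝ)+1) * |d n|) * r ^ n) ≤ K := by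
    rw [hKdef]
    apply Finset.sum_le_sum
    intro n _
    have hr1n : r ^ n ≤ 1 := pow_le_one₀ hr0 hr1.le
    have h1 : (0:ℝ) ≤ (n:ℝ)+1 := by positivity
    have h2 := hd_bd n
    have h3 : (0:ℝ) ≤ r ^ n := pow_nonneg hr0 n
    calc (((n:ℝ)+1) * |d n|) * r ^ n ≤ (((n:ℝ)+1) * |d n|) * 1 :=
          mul_le_mul_of_nonneg_left hr1n (by positivity)
      _ = ((n:ℝ)+1) * |d n| := mul_one _
      _ ≤ ((n:ℝ)+1) * (M + |L|) := mul_le_mul_of_nonneg_left h2 h1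
  have hwshift_le : ∑' i : ℕ, ((((i+N:ℕ):ℝ)+1) * r ^ (i+N)) ≤ δ⁻¹ * δ⁻¹ := by
    have h1 := Summable.sum_add_tsum_nat_add N hsum_w
    have h2 : 0 ≤ ∑ n ∈ range N, (((n:ℝ)+1) * r ^ n) := by
      apply Finset.sum_nonneg
      intro n _
      have : (0:ℝ) ≤ (n:ℝ)+1 := by positivity
      have h3 : (0:ℝ) ≤ r ^ n := pow_nonneg hr0 n
      positivity
    have h4 : ∑' i : ℕ, ((((i+N:ℕ):ℝ)+1) * r ^ (i+N)) ≤ ∑' n : ℕ, (((n:ℝ)+1) * r ^ n) := by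
      linarith [h1, h2]
    rw [hW] at h4
    exact h4
  have htail : ∑' i : ℕ, ((((i+N:ℕ):ℝ)+1) * |d (i+N)|) * r ^ (i+N) ≤ (ε/2) * (δ⁻¹ * δ⁻¹) := by
    have hble : ∀ i : ℕ, ((((i+N:ℕ):ℝ)+1) * |d (i+N)|) * r ^ (i+N)
        ≤ (ε/2) * (((((i+N:ℕ):ℝ))+1) * r ^ (i+N)) := by
      intro i
      have hd2 : |d (i+N)| ≤ ε/2 := by
        have := hN (i+N) (by omega)
        rw [Real.dist_eq, sub_zero] at this
        linarith
      have h1 : (0:ℝ) ≤ (((i+N:ℕ):ℝ))+1 := by positivity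
      have h3 : (0:ℝ) ≤ r ^ (i+N) := pow_nonneg hr0 _
      calc ((((i+N:ℕ):ℝ)+1) * |d (i+N)|) * r ^ (i+N)
          = (|d (i+N)| * ((((i+N:ℕ):ℝ))+1)) * r ^ (i+N) := by ring
        _ ≤ ((ε/2) * ((((i+N:ℕ):ℝ))+1)) * r ^ (i+N) := by
            apply mul_le_mul_of_nonneg_right _ h3
            exact mul_le_mul_of_nonneg_right hd2 h1
        _ = (ε/2) * (((((i+N:ℕ):ℝ))+1) * r ^ (i+N)) := by ring
    have hs1 : Summable (fun i => ((((i+N:ℕ):ℝ)+1) * |d (i+N)|) * r ^ (i+N)) :=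
      (summable_nat_add_iff (f := fun n : ℕ => (((n:ℝ)+1) * |d n|) * r ^ n) N).mpr hsum_wabs
    have hs2 : Summable (fun i => (ε/2) * (((((i+N:ℕ):ℝ))+1) * r ^ (i+N))) :=
      ((summable_nat_add_iff (f := fun n : ℕ => ((n:ℝ)+1) * r ^ n) N).mpr hsum_w).mul_left (ε/2)
    calc ∑' i : ℕ, ((((i+N:ℕ):ℝ)+1) * |d (i+N)|) * r ^ (i+N)
        ≤ ∑' i : ℕ, (ε/2) * (((((i+N:ℕ):ℝ))+1) * r ^ (i+N)) := Summable.tsum_le_tsum hble hs1 hs2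
      _ = (ε/2) * ∑' i : ℕ, (((((i+N:ℕ):ℝ))+1) * r ^ (i+N)) := tsum_mul_left
      _ ≤ (ε/2) * (δ⁻¹ * δ⁻¹) := by
          apply mul_le_mul_of_nonneg_left hwshift_le (by positivity)
  have hWa_le : Wa ≤ K + (ε/2) * (δ⁻¹ * δ⁻¹) := by
    rw [hWadef, ← hsplit]
    linarith [hhead, htail]
  have hWa0 : 0 ≤ Wa := by
    rw [hWadef]
    apply tsum_nonneg
    intro n
    have h1 : (0:ℝ) ≤ (n:ℝ)+1 := by positivity
    have h3 : (0:ℝ) ≤ r ^ n := pow_nonneg hr0 n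
    positivity
  -- final estimate
  rw [Real.dist_eq, key, abs_mul, abs_of_nonneg (sq_nonneg δ)]
  have hδ2 : δ^2 * δ⁻¹ * δ⁻¹ = 1 := by field_simp
  have hfin : δ^2 * |Wd| ≤ δ^2 * K + ε/2 := by
    have h1 : δ^2 * |Wd| ≤ δ^2 * Wa :=
      mul_le_mul_of_nonneg_left habs (sq_nonneg δ)
    have h2 : δ^2 * Wa ≤ δ^2 * (K + (ε/2) * (δ⁻¹ * δ⁻¹)) :=
      mul_le_mul_of_nonneg_left hWa_le (sq_nonneg δ)
    have h3 : δ^2 * (K + (ε/2) * (δ⁻¹ * δ⁻¹)) = δ^2 * K + ε/2 := by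
      have : δ^2 * ((ε/2) * (δ⁻¹ * δ⁻¹)) = ε/2 := by field_simp
      linarith [this]
    linarith
  have hlast : δ^2 * K < ε/2 := by
    have hδle1 : δ ≤ 1 := hδ1.le
    have h1 : δ^2 ≤ δ := by nlinarith
    have h2 : δ * K < ε/2 := by
      have h3 : δ * (K+1) < ε/2 := by
        have := mul_lt_mul_of_pos_right hδsmall (by linarith : (0:ℝ) < K+1)
        calc δ * (K+1) < ε/(2*(K+1)) * (K+1) := this
          _ = ε/2 := by field_simp
      nlinarith
    nlinarith
  linarith



open MeasureTheory ProbabilityTheory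

theorem weak_law_of_small_step_sizes
    {Ω : Type*} [MeasurableSpace Ω] (μ : Measure Ω) [IsProbabilityMeasure μ]
    (z : ℕ → Ω → ℝ) (hmeas : ∀ m, Measurable (z m))
    (hindep : iIndepFun z μ)
    (hident : ∀ m, Measure.map (z m) μ = Measure.map (z 0) μ)
    (hint : Integrable (z 0) μ)
    (α : ℕ → ℝ) (hα : ∀ m, α m ∈ Set.Ioo (0:ℝ) 1)
    (a κ β : ℝ) (hκ : 0 < κ) (hβ : β ∈ Set.Ioo (0:ℝ) 1)
    (hgeo : ∀ m, |α m - a| ≤ κ * β ^ m) :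
    ∀ ε > (0:ℝ),
      Filter.Tendsto
        (fun δ => μ {ω | ε < |(∑' m : ℕ, δ * (1 - δ) ^ m * α m * z m ω)
          - a * ∫ ω', z 0 ω' ∂μ|})
        (nhdsWithin 0 (Set.Ioo (0:ℝ) 1)) (nhds 0) := by
  intro ε hε
  obtain ⟨hβ0, hβ1⟩ := hβ
  set I : ℝ := ∫ ω', z 0 ω' ∂μ with hIdef
  set c : ℝ := a * I with hcdef
  -- (1) strong law of large numbers
  have hslln : ∀ᵐ ω ∂μ, Tendsto (fun n : ℕ => (∑ i ∈ range n, z i ω) / n) atTop (𝓝 I) := by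
    have h1 := strong_law_ae (μ := μ) z hint
      (fun i j hij => hindep.indepFun hij)
      (fun i => ⟨(hmeas i).aemeasurable, (hmeas 0).aemeasurable, hident i⟩)
    filter_upwards [h1] with ω hω
    have h2 : (fun n : ℕ => (∑ i ∈ range n, z i ω) / n)
        = fun n : ℕ => (n:ℝ)⁻¹ • (∑ i ∈ range n, z i ω) := by
      funext n; rw [smul_eq_mul]; ring
    rw [h2]
    exact hω
  -- (2) a.e. summability of the β-weighted series
  have hsummable : ∀ᵐ ω ∂μ, Summable (fun m : ℕ => β ^ m * |z m ω|) := by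
    have hnorm_int : ∀ m : ℕ, ∫⁻ ω, (‖z m ω‖₊ : ℝ≥0∞) ∂μ = ∫⁻ ω, (‖z 0 ω‖₊ : ℝ≥0∞) ∂μ := by
      intro m
      have e : Measurable fun x : ℝ => (‖x‖₊ : ℝ≥0∞) := measurable_nnnorm.coe_nnreal_ennreal
      rw [← lintegral_map e (hmeas m), hident m, lintegral_map e (hmeas 0)]
    have hI_top : ∫⁻ ω, (‖z 0 ω‖₊ : ℝ≥0∞) ∂μ ≠ ⊤ := hint.2.ne
    have hterm : ∀ m : ℕ, ∫⁻ ω, (‖β ^ m * z m ω‖₊ : ℝ≥0∞) ∂μ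
        = ENNReal.ofReal β ^ m * ∫⁻ ω, (‖z 0 ω‖₊ : ℝ≥0∞) ∂μ := by
      intro m
      have h1 : ∀ ω, (‖β ^ m * z m ω‖₊ : ℝ≥0∞)
          = ENNReal.ofReal β ^ m * (‖z m ω‖₊ : ℝ≥0∞) := by
        intro ω
        rw [nnnorm_mul, ENNReal.coe_mul, ← ENNReal.ofReal_pow hβ0.le]
        congr 1
        exact Real.enorm_eq_ofReal (by positivity)
      simp_rw [h1]
      rw [lintegral_const_mul _ (hmeas m).nnnorm.coe_nnreal_ennreal, hnorm_int m]
    have hgeo_fin : ∑' m : ℕ, ENNReal.ofReal β ^ m ≠ ⊤ := by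
      rw [ENNReal.tsum_geometric]
      refine ENNReal.inv_ne_top.mpr ?_
      have hblt : ENNReal.ofReal β < 1 := ENNReal.ofReal_lt_one.mpr hβ1
      simp only [ne_eq, tsub_eq_zero_iff_le, not_le]
      exact hblt
    have htsum_ne : ∑' m : ℕ, ∫⁻ ω, (‖β ^ m * z m ω‖₊ : ℝ≥0∞) ∂μ ≠ ⊤ := by
      rw [tsum_congr hterm, ENNReal.tsum_mul_right]
      exact ENNReal.mul_ne_top hgeo_fin hI_top
    have hm : ∀ m : ℕ, AEMeasurable (fun ω => (‖β ^ m * z m ω‖₊ : ℝ≥0∞)) μ :=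
      fun m => (((hmeas m).const_mul (β ^ m)).nnnorm.coe_nnreal_ennreal).aemeasurable
    have h3 : ∫⁻ ω, (∑' m : ℕ, (‖β ^ m * z m ω‖₊ : ℝ≥0∞)) ∂μ ≠ ⊤ := by
      rw [lintegral_tsum hm]; exact htsum_ne
    have hae1 := ae_lt_top' (AEMeasurable.ennreal_tsum hm) h3
    filter_upwards [hae1] with ω hω
    have h4 : Summable (fun m : ℕ => ((‖β ^ m * z m ω‖₊ : ℝ≥0) : ℝ)) := by
      rw [← ENNReal.tsum_coe_ne_top_iff_summable_coe]
      exact hω.ne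
    refine h4.congr fun m => ?_
    rw [coe_nnnorm, Real.norm_eq_abs, abs_mul, abs_of_nonneg (by positivity : (0:ℝ) ≤ β ^ m)]
  -- summability package
  have hsums : ∀ ω : Ω, Tendsto (fun n : ℕ => (∑ i ∈ range n, z i ω) / n) atTop (𝓝 I) →
      Summable (fun m : ℕ => β ^ m * |z m ω|) → ∀ δ : ℝ, δ ∈ Set.Ioo (0:ℝ) 1 →
      Summable (fun m : ℕ => (1 - δ) ^ m * z m ω)
      ∧ Summable (fun m : ℕ => (1 - δ) ^ m * ((α m - a) * z m ω))
      ∧ Summable (fun m : ℕ => δ * (1 - δ) ^ m * α m * z m ω) := by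
    intro ω hces hsum δ hδ
    obtain ⟨hδ0, hδ1⟩ := hδ
    obtain ⟨M, hM0, hMx⟩ := cesaro_x_bound hces
    have hr0 : (0:ℝ) ≤ 1 - δ := by linarith
    have hr : |1 - δ| < 1 := by rw [abs_of_nonneg hr0]; linarith
    have hP : Summable (fun m : ℕ => (1 - δ) ^ m * z m ω) :=
      (summable_linear_mul_geometric hr hMx).congr fun m => mul_comm _ _
    have hQ : Summable (fun m : ℕ => (1 - δ) ^ m * ((α m - a) * z m ω)) := by
      refine Summable.of_norm_bounded (hsum.mul_left κ)
        fun m => ?_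
      have h1 : (1 - δ) ^ m ≤ 1 := pow_le_one₀ hr0 (by linarith)
      have h2 := hgeo m
      have h3 : (0:ℝ) ≤ |z m ω| := abs_nonneg _
      have h4 : (0:ℝ) ≤ (1 - δ) ^ m := pow_nonneg hr0 m
      calc ‖(1 - δ) ^ m * ((α m - a) * z m ω)‖
          = (1 - δ) ^ m * (|α m - a| * |z m ω|) := by
            rw [Real.norm_eq_abs, abs_mul, abs_mul, abs_pow, abs_of_nonneg hr0]
        _ ≤ 1 * (|α m - a| * |z m ω|) :=
            mul_le_mul_of_nonneg_right h1 (by positivity)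
        _ = |α m - a| * |z m ω| := one_mul _
        _ ≤ (κ * β ^ m) * |z m ω| := mul_le_mul_of_nonneg_right h2 h3
        _ = κ * (β ^ m * |z m ω|) := by ring
    refine ⟨hP, hQ, ?_⟩
    exact (((hP.mul_left a).add hQ).mul_left δ).congr fun m => by ring
  -- (3) the a.e. pointwise limit in δ
  have hgood : ∀ᵐ ω ∂μ, Tendsto (fun δ : ℝ => ∑' m : ℕ, δ * (1 - δ) ^ m * α m * z m ω)
      (nhdsWithin 0 (Set.Ioo (0:ℝ) 1)) (𝓝 c) := by
    filter_upwards [hslln, hsummable] with ω hces hsum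
    set C : ℝ := ∑' m : ℕ, β ^ m * |z m ω| with hCdef
    have hQbound : ∀ δ : ℝ, δ ∈ Set.Ioo (0:ℝ) 1 →
        |∑' m : ℕ, (1 - δ) ^ m * ((α m - a) * z m ω)| ≤ κ * C := by
      intro δ hδ
      obtain ⟨hδ0, hδ1⟩ := hδ
      have hr0 : (0:ℝ) ≤ 1 - δ := by linarith
      have hbd : ∀ m : ℕ, ‖(1 - δ) ^ m * ((α m - a) * z m ω)‖ ≤ κ * (β ^ m * |z m ω|) := by
        intro m
        have h1 : (1 - δ) ^ m ≤ 1 := pow_le_one₀ hr0 (by linarith)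
        have h2 := hgeo m
        have h3 : (0:ℝ) ≤ |z m ω| := abs_nonneg _
        calc ‖(1 - δ) ^ m * ((α m - a) * z m ω)‖
            = (1 - δ) ^ m * (|α m - a| * |z m ω|) := by
              rw [Real.norm_eq_abs, abs_mul, abs_mul, abs_pow, abs_of_nonneg hr0]
          _ ≤ 1 * (|α m - a| * |z m ω|) :=
              mul_le_mul_of_nonneg_right h1 (by positivity)
          _ = |α m - a| * |z m ω| := one_mul _
          _ ≤ (κ * β ^ m) * |z m ω| := mul_le_mul_of_nonneg_right h2 h3
          _ = κ * (β ^ m * |z m ω|) := by ring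
      have hsnorm : Summable (fun m : ℕ => ‖(1 - δ) ^ m * ((α m - a) * z m ω)‖) :=
        Summable.of_nonneg_of_le (fun m => norm_nonneg _) hbd (hsum.mul_left κ)
      calc |∑' m : ℕ, (1 - δ) ^ m * ((α m - a) * z m ω)|
          ≤ ∑' m : ℕ, ‖(1 - δ) ^ m * ((α m - a) * z m ω)‖ := by
            simpa [Real.norm_eq_abs] using norm_tsum_le_tsum_norm hsnorm
        _ ≤ ∑' m : ℕ, κ * (β ^ m * |z m ω|) := Summable.tsum_le_tsum hbd hsnorm (hsum.mul_left κ)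
        _ = κ * C := by rw [tsum_mul_left]
    have hQ0 : Tendsto (fun δ : ℝ => δ * ∑' m : ℕ, (1 - δ) ^ m * ((α m - a) * z m ω))
        (nhdsWithin 0 (Set.Ioo (0:ℝ) 1)) (𝓝 0) := by
      have hbound : ∀ᶠ δ : ℝ in nhdsWithin 0 (Set.Ioo (0:ℝ) 1),
          ‖δ * ∑' m : ℕ, (1 - δ) ^ m * ((α m - a) * z m ω)‖ ≤ δ * (κ * C) := by
        filter_upwards [self_mem_nhdsWithin] with δ hδ
        have hδ0 : (0:ℝ) ≤ δ := hδ.1.le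
        rw [Real.norm_eq_abs, abs_mul, abs_of_nonneg hδ0]
        exact mul_le_mul_of_nonneg_left (hQbound δ hδ) hδ0
      have h2 : Tendsto (fun δ : ℝ => δ * (κ * C)) (nhdsWithin 0 (Set.Ioo (0:ℝ) 1))
          (𝓝 (0 * (κ * C))) :=
        ((tendsto_id.mono_left nhdsWithin_le_nhds).mul_const _)
      rw [zero_mul] at h2
      exact squeeze_zero_norm' hbound h2
    have hlim : Tendsto (fun δ : ℝ => a * (δ * ∑' m : ℕ, (1 - δ) ^ m * z m ω)
        + δ * ∑' m : ℕ, (1 - δ) ^ m * ((α m - a) * z m ω))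
        (nhdsWithin 0 (Set.Ioo (0:ℝ) 1)) (𝓝 c) := by
      have h3 := ((frobenius_abel_cesaro hces).const_mul a).add hQ0
      simpa [hcdef] using h3
    apply hlim.congr'
    filter_upwards [self_mem_nhdsWithin] with δ hδ
    obtain ⟨hP, hQ, _⟩ := hsums ω hces hsum δ hδ
    have h1 : ∀ m : ℕ, δ * (1 - δ) ^ m * α m * z m ω
        = δ * ((a * ((1 - δ) ^ m * z m ω)) + ((1 - δ) ^ m * ((α m - a) * z m ω))) :=
      fun m => by ring
    rw [tsum_congr h1, tsum_mul_left, Summable.tsum_add (hP.mul_left a) hQ, tsum_mul_left]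
    ring
  -- (4) measurability
  set T : ℝ → Ω → ℝ := fun δ ω => ∑' m : ℕ, δ * (1 - δ) ^ m * α m * z m ω with hTdef
  have hTmeas : ∀ δ : ℝ, δ ∈ Set.Ioo (0:ℝ) 1 → AEStronglyMeasurable (T δ) μ := by
    intro δ hδ
    have hpart : ∀ k : ℕ, Measurable (fun ω => ∑ m ∈ range k, δ * (1 - δ) ^ m * α m * z m ω) :=
      fun k => Finset.measurable_sum _ fun m _ => (hmeas m).const_mul _
    have htend : ∀ᵐ ω ∂μ, Tendsto (fun k => ∑ m ∈ range k, δ * (1 - δ) ^ m * α m * z m ω)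
        atTop (𝓝 (T δ ω)) := by
      filter_upwards [hslln, hsummable] with ω hces hsum
      exact (hsums ω hces hsum δ hδ).2.2.hasSum.tendsto_sum_nat
    exact aestronglyMeasurable_of_tendsto_ae atTop
      (fun k => (hpart k).aestronglyMeasurable) htend
  -- (5) sequential reduction and convergence in measure
  rw [Filter.tendsto_iff_seq_tendsto]
  intro u hu
  have humem : ∀ᶠ n in atTop, u n ∈ Set.Ioo (0:ℝ) 1 := hu self_mem_nhdsWithin
  classical
  set v : ℕ → ℝ := fun n => if u n ∈ Set.Ioo (0:ℝ) 1 then u n else 1/2 with hvdef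
  have hv_mem : ∀ n, v n ∈ Set.Ioo (0:ℝ) 1 := by
    intro n
    simp only [hvdef]
    by_cases h : u n ∈ Set.Ioo (0:ℝ) 1
    · rw [if_pos h]; exact h
    · rw [if_neg h]
      exact Set.mem_Ioo.mpr ⟨by norm_num, by norm_num⟩
  have huv : ∀ᶠ n in atTop, u n = v n := humem.mono fun n h => by
    simp only [hvdef]
    rw [if_pos h]
  have hv_tend : Tendsto v atTop (nhdsWithin 0 (Set.Ioo (0:ℝ) 1)) := hu.congr' huv
  have haeT : ∀ᵐ ω ∂μ, Tendsto (fun n => T (v n) ω) atTop (𝓝 c) := by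
    filter_upwards [hgood] with ω hω
    exact hω.comp hv_tend
  have him := tendstoInMeasure_iff_dist.mp (tendstoInMeasure_of_tendsto_ae (f := fun n => T (v n)) (g := fun _ => c)
      (fun n => hTmeas (v n) (hv_mem n)) haeT) ε hε
  have hv_goal : Tendsto (fun n => μ {ω | ε < |T (v n) ω - c|}) atTop (𝓝 0) := by
    refine tendsto_of_tendsto_of_tendsto_of_le_of_le tendsto_const_nhds him
      (fun n => zero_le) (fun n => measure_mono ?_)
    intro ω hω
    simp only [Set.mem_setOf_eq] at hω ⊢
    rw [Real.dist_eq]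
    exact le_of_lt hω
  apply hv_goal.congr'
  filter_upwards [huv] with n hn
  simp only [Function.comp_apply]
  rw [hn]
end

section
/- Let (z_m) be i.i.d. with finite variance σ² and mean m_z, and let c_m(δ) = δ(1-δ)^m α_m with α_m ∈ (0,1), |α_m − α| ≤ κβ^m. Then the Lindeberg condition holds for the triangular array {(c_m(δ)(z_m − m_z))/√δ}_{m≥0} as δ → 0, since max_m c_m(δ)/√δ ≤ √δ → 0 while ∑_m c_m(δ)²/δ → α²/2. -/
open MeasureTheory ProbabilityTheory Filter

lemma tail_sq_tendsto {Ω : Type*} [MeasurableSpace Ω] (μ : Measure Ω) [IsFiniteMeasure μ]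
    (Y : Ω → ℝ) (hY : Measurable Y)
    (hint : Integrable (fun ω => (Y ω)^2) μ) :
    Tendsto (fun R : ℝ => ∫ ω in {ω | R ≤ |Y ω|}, (Y ω)^2 ∂μ) atTop (nhds 0) := by
  have hmeasS : ∀ R : ℝ, MeasurableSet {ω | R ≤ |Y ω|} := fun R =>
    measurableSet_le measurable_const hY.abs
  have hnonneg : ∀ R : ℝ, 0 ≤ ∫ ω in {ω | R ≤ |Y ω|}, (Y ω)^2 ∂μ := fun R =>
    setIntegral_nonneg (hmeasS R) (fun ω _ => sq_nonneg _)
  have hseq : Tendsto (fun n : ℕ => ∫ ω in {ω | |Y ω| < (n:ℝ)}, (Y ω)^2 ∂μ) atTop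
      (nhds (∫ ω, (Y ω)^2 ∂μ)) := by
    have hmono : Monotone (fun n : ℕ => {ω | |Y ω| < (n:ℝ)}) := by
      intro i j hij ω h
      simp only [Set.mem_setOf_eq] at h ⊢
      exact lt_of_lt_of_le h (by exact_mod_cast hij)
    have hunion : (⋃ n : ℕ, {ω | |Y ω| < (n:ℝ)}) = Set.univ := by
      ext ω
      simp only [Set.mem_iUnion, Set.mem_setOf_eq, Set.mem_univ, iff_true]
      exact exists_nat_gt _
    have := tendsto_setIntegral_of_monotone
      (fun n : ℕ => measurableSet_lt hY.abs measurable_const) hmono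
      (by rw [hunion]; exact hint.integrableOn)
    rwa [hunion, setIntegral_univ] at this
  have hcompl : ∀ n : ℕ, ∫ ω in {ω | (n:ℝ) ≤ |Y ω|}, (Y ω)^2 ∂μ
      = (∫ ω, (Y ω)^2 ∂μ) - ∫ ω in {ω | |Y ω| < (n:ℝ)}, (Y ω)^2 ∂μ := by
    intro n
    have h := integral_add_compl (s := {ω | |Y ω| < (n:ℝ)})
      (measurableSet_lt hY.abs measurable_const) hint
    have hc : {ω | |Y ω| < (n:ℝ)}ᶜ = {ω | (n:ℝ) ≤ |Y ω|} := by
      ext ω; simp [not_lt]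
    rw [hc] at h
    linarith
  have hseq0 : Tendsto (fun n : ℕ => ∫ ω in {ω | (n:ℝ) ≤ |Y ω|}, (Y ω)^2 ∂μ) atTop (nhds 0) := by
    simp only [hcompl]
    have := (tendsto_const_nhds :
      Tendsto (fun _ : ℕ => ∫ ω, (Y ω)^2 ∂μ) atTop (nhds (∫ ω, (Y ω)^2 ∂μ))).sub hseq
    simpa using this
  rw [Metric.tendsto_atTop] at hseq0 ⊢
  intro η hη
  obtain ⟨N, hN⟩ := hseq0 η hη
  refine ⟨(N:ℝ), fun R hR => ?_⟩
  have h1 := hN N le_rfl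
  have hmonoR : ∫ ω in {ω | R ≤ |Y ω|}, (Y ω)^2 ∂μ
      ≤ ∫ ω in {ω | (N:ℝ) ≤ |Y ω|}, (Y ω)^2 ∂μ :=
    setIntegral_mono_set hint.integrableOn
      (Filter.Eventually.of_forall fun ω => sq_nonneg _)
      (HasSubset.Subset.eventuallyLE (fun ω h => le_trans hR h))
  rw [Real.dist_eq, sub_zero, abs_of_nonneg (hnonneg R)]
  rw [Real.dist_eq, sub_zero, abs_of_nonneg (hnonneg _)] at h1
  linarith

theorem lindeberg_condition_for_weighted_array
    {Ω : Type*} [MeasurableSpace Ω] (μ : Measure Ω) [IsProbabilityMeasure μ]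
    (z : ℕ → Ω → ℝ) (hmeas : ∀ m, Measurable (z m))
    (hindep : iIndepFun z μ)
    (hident : ∀ m, Measure.map (z m) μ = Measure.map (z 0) μ)
    (hL2 : MemLp (z 0) 2 μ)
    (α : ℕ → ℝ) (hα : ∀ m, α m ∈ Set.Ioo (0:ℝ) 1)
    (a κ β : ℝ) (hκ : 0 < κ) (hβ : β ∈ Set.Ioo (0:ℝ) 1)
    (hgeo : ∀ m, |α m - a| ≤ κ * β ^ m)
    (mz : ℝ) (hmz : mz = ∫ ω, z 0 ω ∂μ) :
    (∀ δ ∈ Set.Ioo (0:ℝ) 1, ∀ m : ℕ,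
        δ * (1 - δ) ^ m * α m / Real.sqrt δ ≤ Real.sqrt δ) ∧
    (Filter.Tendsto
        (fun δ => (∑' m : ℕ, (δ * (1 - δ) ^ m * α m) ^ 2) / δ)
        (nhdsWithin 0 (Set.Ioo (0:ℝ) 1)) (nhds (a ^ 2 / 2))) ∧
    (∀ ε > (0:ℝ),
      Filter.Tendsto
        (fun δ => ∑' m : ℕ,
          ∫ ω in {ω | ε ≤ |δ * (1 - δ) ^ m * α m * (z m ω - mz) / Real.sqrt δ|},
            (δ * (1 - δ) ^ m * α m * (z m ω - mz) / Real.sqrt δ) ^ 2 ∂μ)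
        (nhdsWithin 0 (Set.Ioo (0:ℝ) 1)) (nhds 0)) := by
  -- Part 1
  have hpart1 : ∀ δ ∈ Set.Ioo (0:ℝ) 1, ∀ m : ℕ,
      δ * (1 - δ) ^ m * α m / Real.sqrt δ ≤ Real.sqrt δ := by
    intro δ hδ m
    have hδ0 := hδ.1
    have hδ1 := hδ.2
    have hs : 0 < Real.sqrt δ := Real.sqrt_pos.mpr hδ0
    rw [div_le_iff₀ hs]
    have hss : Real.sqrt δ * Real.sqrt δ = δ := Real.mul_self_sqrt hδ0.le
    rw [hss]
    have h1 : (1 - δ)^m ≤ 1 := pow_le_one₀ (by linarith) (by linarith)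
    have h2 : (0:ℝ) ≤ (1 - δ)^m := pow_nonneg (by linarith) m
    have hb : (1 - δ)^m * α m ≤ 1 := by
      calc (1 - δ)^m * α m ≤ (1 - δ)^m * 1 :=
            mul_le_mul_of_nonneg_left (hα m).2.le h2
        _ ≤ 1 := by rw [mul_one]; exact h1
    calc δ * (1 - δ)^m * α m = δ * ((1 - δ)^m * α m) := by ring
      _ ≤ δ * 1 := mul_le_mul_of_nonneg_left hb hδ0.le
      _ = δ := mul_one _
  refine ⟨hpart1, ?_, ?_⟩
  · -- Part 2
    have hbd : ∀ δ ∈ Set.Ioo (0:ℝ) 1,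
        |(∑' m : ℕ, (δ * (1 - δ) ^ m * α m) ^ 2) / δ - a ^ 2 / (2 - δ)|
          ≤ δ * (κ * (1 + |a|) * (1 - β)⁻¹) := by
      intro δ hδ
      have hδ0 := hδ.1
      have hδ1 := hδ.2
      set r : ℝ := (1 - δ)^2 with hrdef
      have hr0 : (0:ℝ) ≤ r := sq_nonneg _
      have hr1 : r < 1 := by
        rw [hrdef, ← sq_abs]
        exact pow_lt_one₀ (abs_nonneg _)
          (by rw [abs_of_pos (by linarith)]; linarith) (by norm_num)
      have hgsum : Summable (fun m : ℕ => r ^ m) := summable_geometric_of_lt_one hr0 hr1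
      have hβsum : Summable (fun m : ℕ => κ * (1 + |a|) * β ^ m) :=
        (summable_geometric_of_lt_one hβ.1.le hβ.2).mul_left _
      have herr_bd : ∀ m : ℕ, |r ^ m * ((α m)^2 - a^2)| ≤ κ * (1 + |a|) * β ^ m := by
        intro m
        have h1 : |(α m)^2 - a^2| = |α m - a| * |α m + a| := by
          rw [← abs_mul]; congr 1; ring
        have h2 : |α m + a| ≤ 1 + |a| := by
          calc |α m + a| ≤ |α m| + |a| := abs_add_le _ _
            _ ≤ 1 + |a| := by
                have := (hα m).1; have := (hα m).2
                rw [abs_of_pos (hα m).1]; linarith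
        have h3 : r ^ m ≤ 1 := pow_le_one₀ hr0 hr1.le
        have h4 : (0:ℝ) ≤ r ^ m := pow_nonneg hr0 m
        rw [abs_mul, abs_pow, abs_of_nonneg hr0, h1]
        calc r ^ m * (|α m - a| * |α m + a|) ≤ 1 * (|α m - a| * |α m + a|) := by
              exact mul_le_mul_of_nonneg_right h3 (mul_nonneg (abs_nonneg _) (abs_nonneg _))
          _ = |α m - a| * |α m + a| := one_mul _
          _ ≤ (κ * β ^ m) * (1 + |a|) := by
              exact mul_le_mul (hgeo m) h2 (abs_nonneg _) (mul_nonneg hκ.le (pow_nonneg hβ.1.le m))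
          _ = κ * (1 + |a|) * β ^ m := by ring
      have herr_sum : Summable (fun m : ℕ => r ^ m * ((α m)^2 - a^2)) := by
        apply Summable.of_abs
        exact Summable.of_nonneg_of_le (fun m => abs_nonneg _) herr_bd hβsum
      have hmain_sum : Summable (fun m : ℕ => r ^ m * (α m)^2) := by
        apply Summable.of_nonneg_of_le (fun m => by positivity)
          (fun m => ?_) hgsum
        have h3 : (α m)^2 ≤ 1 := by nlinarith [(hα m).1, (hα m).2]
        calc r ^ m * (α m)^2 ≤ r ^ m * 1 :=
              mul_le_mul_of_nonneg_left h3 (pow_nonneg hr0 m)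
          _ = r ^ m := mul_one _
      have hrw : (fun m : ℕ => (δ * (1 - δ) ^ m * α m) ^ 2)
          = fun m : ℕ => δ^2 * (r ^ m * (α m)^2) := by
        funext m
        have hpp : ((1-δ)^2)^m = ((1-δ)^m)^2 := by
          rw [← pow_mul, ← pow_mul, mul_comm]
        rw [hrdef, hpp]
        ring
      have htsum : (∑' m : ℕ, (δ * (1 - δ) ^ m * α m) ^ 2)
          = δ^2 * ∑' m : ℕ, r ^ m * (α m)^2 := by
        rw [hrw, tsum_mul_left]
      have hdivrw : (∑' m : ℕ, (δ * (1 - δ) ^ m * α m) ^ 2) / δ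
          = δ * ∑' m : ℕ, r ^ m * (α m)^2 := by
        rw [htsum]
        field_simp
      have h1r : 1 - r = δ * (2 - δ) := by rw [hrdef]; ring
      have hkey : δ * (a^2 * ∑' m : ℕ, r ^ m) = a^2 / (2 - δ) := by
        rw [tsum_geometric_of_lt_one hr0 hr1, h1r, mul_inv, div_eq_mul_inv]
        calc δ * (a^2 * (δ⁻¹ * (2-δ)⁻¹)) = (δ * δ⁻¹) * (a^2 * (2-δ)⁻¹) := by ring
          _ = a^2 * (2-δ)⁻¹ := by rw [mul_inv_cancel₀ hδ0.ne', one_mul]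
      have hdiff : (∑' m : ℕ, (δ * (1 - δ) ^ m * α m) ^ 2) / δ - a^2/(2-δ)
          = δ * ∑' m : ℕ, r ^ m * ((α m)^2 - a^2) := by
        rw [hdivrw, ← hkey, ← mul_sub]
        congr 1
        rw [← tsum_mul_left]
        rw [← Summable.tsum_sub hmain_sum (hgsum.mul_left (a^2))]
        congr 1
        funext m
        ring
      rw [hdiff, abs_mul, abs_of_pos hδ0]
      apply mul_le_mul_of_nonneg_left _ hδ0.le
      calc |∑' m : ℕ, r ^ m * ((α m)^2 - a^2)|
          ≤ ∑' m : ℕ, |r ^ m * ((α m)^2 - a^2)| := by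
            have hns : Summable (fun m : ℕ => ‖r ^ m * ((α m)^2 - a^2)‖) := by
              simp only [Real.norm_eq_abs]
              exact Summable.of_nonneg_of_le (fun m => abs_nonneg _) herr_bd hβsum
            have h := norm_tsum_le_tsum_norm hns
            simp only [Real.norm_eq_abs] at h
            exact h
        _ ≤ ∑' m : ℕ, κ * (1 + |a|) * β ^ m := by
            apply Summable.tsum_le_tsum herr_bd _ hβsum
            exact Summable.of_nonneg_of_le (fun m => abs_nonneg _) herr_bd hβsum
        _ = κ * (1 + |a|) * (1 - β)⁻¹ := by
            rw [tsum_mul_left, tsum_geometric_of_lt_one hβ.1.le hβ.2]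
    have hmain : Tendsto (fun δ : ℝ => a^2/(2-δ)) (nhdsWithin 0 (Set.Ioo (0:ℝ) 1))
        (nhds (a^2/2)) := by
      have h2 : Tendsto (fun δ : ℝ => (2:ℝ) - δ) (nhds 0) (nhds 2) := by
        simpa using (tendsto_const_nhds.sub tendsto_id : Tendsto (fun δ : ℝ => (2:ℝ) - δ) (nhds 0) (nhds (2 - 0)))
      have := (tendsto_const_nhds.div h2 (by norm_num) :
        Tendsto (fun δ : ℝ => a^2/(2-δ)) (nhds 0) (nhds (a^2/2)))
      exact this.mono_left nhdsWithin_le_nhds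
    have hrem : Tendsto (fun δ : ℝ =>
        (∑' m : ℕ, (δ * (1 - δ) ^ m * α m) ^ 2) / δ - a^2/(2-δ))
        (nhdsWithin 0 (Set.Ioo (0:ℝ) 1)) (nhds 0) := by
      apply squeeze_zero_norm' (a := fun δ : ℝ => δ * (κ * (1 + |a|) * (1 - β)⁻¹))
      · filter_upwards [self_mem_nhdsWithin] with δ hδ
        exact hbd δ hδ
      · have : Tendsto (fun δ : ℝ => δ * (κ * (1 + |a|) * (1 - β)⁻¹)) (nhds 0)
            (nhds (0 * (κ * (1 + |a|) * (1 - β)⁻¹))) := tendsto_id.mul_const _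
        rw [zero_mul] at this
        exact this.mono_left nhdsWithin_le_nhds
    have := hmain.add hrem
    rw [add_zero] at this
    apply this.congr
    intro δ
    ring
  · -- Part 3
    intro ε hε
    have hMem : ∀ m, MemLp (z m) 2 μ := by
      intro m
      have h1 : MemLp (id : ℝ → ℝ) 2 (Measure.map (z 0) μ) := by
        rw [memLp_map_measure_iff aestronglyMeasurable_id (hmeas 0).aemeasurable]
        exact hL2
      have h2 : MemLp (id : ℝ → ℝ) 2 (Measure.map (z m) μ) := by
        rw [hident m]; exact h1
      have := (memLp_map_measure_iff aestronglyMeasurable_id (hmeas m).aemeasurable).mp h2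
      simpa using this
    have hIntSq : ∀ m, Integrable (fun ω => (z m ω - mz)^2) μ := by
      intro m
      have := ((hMem m).sub (memLp_const mz)).integrable_sq
      simpa using this
    have hpush : ∀ (m : ℕ) (R : ℝ),
        ∫ ω in {ω | R ≤ |z m ω - mz|}, (z m ω - mz)^2 ∂μ
          = ∫ ω in {ω | R ≤ |z 0 ω - mz|}, (z 0 ω - mz)^2 ∂μ := by
      intro m R
      have hs : MeasurableSet {x : ℝ | R ≤ |x - mz|} :=
        measurableSet_le measurable_const ((measurable_id.sub measurable_const).abs)
      have hgc : Continuous (fun x : ℝ => (x - mz)^2) := by continuity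
      have e1 := setIntegral_map (μ := μ) (g := z m) (f := fun x : ℝ => (x - mz)^2)
        hs hgc.aestronglyMeasurable (hmeas m).aemeasurable
      have e0 := setIntegral_map (μ := μ) (g := z 0) (f := fun x : ℝ => (x - mz)^2)
        hs hgc.aestronglyMeasurable (hmeas 0).aemeasurable
      rw [hident m] at e1
      exact e1.symm.trans e0
    set G : ℝ → ℝ := fun R => ∫ ω in {ω | R ≤ |z 0 ω - mz|}, (z 0 ω - mz)^2 ∂μ with hGdef
    have hGnonneg : ∀ R, 0 ≤ G R := fun R =>
      setIntegral_nonneg (measurableSet_le measurable_const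
        (((hmeas 0).sub measurable_const).abs)) (fun ω _ => sq_nonneg _)
    have hGtend : Tendsto G atTop (nhds 0) :=
      tail_sq_tendsto μ (fun ω => z 0 ω - mz) ((hmeas 0).sub measurable_const) (hIntSq 0)
    have hdivt : Tendsto (fun δ : ℝ => ε / Real.sqrt δ)
        (nhdsWithin 0 (Set.Ioo (0:ℝ) 1)) atTop := by
      have hsqrt : Tendsto Real.sqrt (nhdsWithin 0 (Set.Ioo (0:ℝ) 1))
          (nhdsWithin 0 (Set.Ioi 0)) := by
        apply tendsto_nhdsWithin_of_tendsto_nhds_of_eventually_within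
        · have : Tendsto Real.sqrt (nhds 0) (nhds (Real.sqrt 0)) :=
            Real.continuous_sqrt.tendsto 0
          rw [Real.sqrt_zero] at this
          exact this.mono_left nhdsWithin_le_nhds
        · filter_upwards [self_mem_nhdsWithin] with x hx
          exact Real.sqrt_pos.mpr hx.1
      have hinv := tendsto_inv_nhdsGT_zero.comp hsqrt
      have := Filter.Tendsto.const_mul_atTop hε hinv
      simpa [div_eq_mul_inv, Function.comp] using this
    have hcomp : Tendsto (fun δ : ℝ => G (ε / Real.sqrt δ))
        (nhdsWithin 0 (Set.Ioo (0:ℝ) 1)) (nhds 0) := hGtend.comp hdivt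
    apply squeeze_zero' ?_ ?_ hcomp
    · filter_upwards [self_mem_nhdsWithin] with δ hδ
      apply tsum_nonneg
      intro m
      apply setIntegral_nonneg
      · exact measurableSet_le measurable_const
          ((((hmeas m).sub measurable_const).const_mul _).div_const _).abs
      · intro ω _
        exact sq_nonneg _
    · filter_upwards [self_mem_nhdsWithin] with δ hδ
      have hδ0 := hδ.1
      have hδ1 := hδ.2
      set s := Real.sqrt δ with hsdef
      have hs : 0 < s := Real.sqrt_pos.mpr hδ0
      set r : ℝ := (1 - δ)^2 with hrdef
      have hr0 : (0:ℝ) ≤ r := sq_nonneg _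
      have hr1 : r < 1 := by
        rw [hrdef, ← sq_abs]
        exact pow_lt_one₀ (abs_nonneg _)
          (by rw [abs_of_pos (by linarith)]; linarith) (by norm_num)
      have hgsum : Summable (fun m : ℕ => r ^ m) := summable_geometric_of_lt_one hr0 hr1
      have termle : ∀ m : ℕ,
          (∫ ω in {ω | ε ≤ |δ * (1 - δ) ^ m * α m * (z m ω - mz) / s|},
            (δ * (1 - δ) ^ m * α m * (z m ω - mz) / s) ^ 2 ∂μ)
          ≤ δ * r ^ m * G (ε / s) := by
        intro m
        set c := δ * (1 - δ) ^ m * α m with hcdef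
        have hc0 : 0 < c := by
          apply mul_pos (mul_pos hδ0 (pow_pos (by linarith) m)) (hα m).1
        have hcs : c / s ≤ s := hpart1 δ hδ m
        have hA_sub_B : {ω | ε ≤ |c * (z m ω - mz) / s|}
            ⊆ {ω | ε / s ≤ |z m ω - mz|} := by
          intro ω hω
          simp only [Set.mem_setOf_eq] at hω ⊢
          have h1 : |c * (z m ω - mz) / s| = (c / s) * |z m ω - mz| := by
            rw [abs_div, abs_mul, abs_of_pos hc0, abs_of_pos hs]
            ring
          rw [h1] at hω
          have h2 : ε ≤ s * |z m ω - mz| := by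
            calc ε ≤ (c / s) * |z m ω - mz| := hω
              _ ≤ s * |z m ω - mz| :=
                  mul_le_mul_of_nonneg_right hcs (abs_nonneg _)
          rw [div_le_iff₀ hs]
          linarith [h2, mul_comm s |z m ω - mz|]
        have hintB : IntegrableOn (fun ω => (c/s)^2 * (z m ω - mz)^2)
            {ω | ε / s ≤ |z m ω - mz|} μ :=
          ((hIntSq m).const_mul _).integrableOn
        have hcsq : (c/s)^2 ≤ δ * r ^ m := by
          have hss : s^2 = δ := Real.sq_sqrt hδ0.le
          have hcle : c ≤ δ * (1-δ)^m := by
            calc c = (δ * (1-δ)^m) * α m := by rw [hcdef]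
              _ ≤ (δ * (1-δ)^m) * 1 := by
                  apply mul_le_mul_of_nonneg_left (hα m).2.le
                  exact mul_nonneg hδ0.le (pow_nonneg (by linarith) m)
              _ = δ * (1-δ)^m := mul_one _
          have hc2 : c^2 ≤ (δ * (1-δ)^m)^2 := by
            apply pow_le_pow_left₀ hc0.le hcle
          rw [div_pow, hss, div_le_iff₀ hδ0]
          calc c^2 ≤ (δ * (1-δ)^m)^2 := hc2
            _ = δ * r ^ m * δ := by
                have hpp : ((1-δ)^2)^m = ((1-δ)^m)^2 := by
                  rw [← pow_mul, ← pow_mul, mul_comm]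
                rw [hrdef, hpp]
                ring
        calc (∫ ω in {ω | ε ≤ |c * (z m ω - mz) / s|},
              (c * (z m ω - mz) / s) ^ 2 ∂μ)
            = ∫ ω in {ω | ε ≤ |c * (z m ω - mz) / s|},
              (c/s)^2 * (z m ω - mz)^2 ∂μ := by
              apply integral_congr_ae
              apply Filter.Eventually.of_forall
              intro ω
              ring
          _ ≤ ∫ ω in {ω | ε / s ≤ |z m ω - mz|},
              (c/s)^2 * (z m ω - mz)^2 ∂μ := by
              apply setIntegral_mono_set hintB
                (Filter.Eventually.of_forall fun ω => by positivity)
                hA_sub_B.eventuallyLE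
          _ = (c/s)^2 * ∫ ω in {ω | ε / s ≤ |z m ω - mz|}, (z m ω - mz)^2 ∂μ :=
              integral_const_mul _ _
          _ = (c/s)^2 * G (ε / s) := by rw [hpush m (ε/s)]
          _ ≤ δ * r ^ m * G (ε / s) :=
              mul_le_mul_of_nonneg_right hcsq (hGnonneg _)
      have hsumg : Summable (fun m : ℕ => δ * r ^ m * G (ε / s)) := by
        have := (hgsum.mul_left δ).mul_right (G (ε / s))
        simpa [mul_assoc] using this
      have termnonneg : ∀ m : ℕ,
          0 ≤ ∫ ω in {ω | ε ≤ |δ * (1 - δ) ^ m * α m * (z m ω - mz) / s|},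
            (δ * (1 - δ) ^ m * α m * (z m ω - mz) / s) ^ 2 ∂μ := by
        intro m
        apply setIntegral_nonneg
        · exact measurableSet_le measurable_const
            ((((hmeas m).sub measurable_const).const_mul _).div_const _).abs
        · intro ω _
          exact sq_nonneg _
      have hsummable_term : Summable (fun m : ℕ =>
          ∫ ω in {ω | ε ≤ |δ * (1 - δ) ^ m * α m * (z m ω - mz) / s|},
            (δ * (1 - δ) ^ m * α m * (z m ω - mz) / s) ^ 2 ∂μ) :=
        Summable.of_nonneg_of_le termnonneg termle hsumg
      calc (∑' m : ℕ, ∫ ω in {ω | ε ≤ |δ * (1 - δ) ^ m * α m * (z m ω - mz) / s|},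
            (δ * (1 - δ) ^ m * α m * (z m ω - mz) / s) ^ 2 ∂μ)
          ≤ ∑' m : ℕ, δ * r ^ m * G (ε / s) :=
            Summable.tsum_le_tsum termle hsummable_term hsumg
        _ = δ * (1 - r)⁻¹ * G (ε / s) := by
            have : (fun m : ℕ => δ * r ^ m * G (ε / s))
                = fun m : ℕ => (δ * G (ε / s)) * r ^ m := by
              funext m; ring
            rw [this, tsum_mul_left, tsum_geometric_of_lt_one hr0 hr1]
            ring
        _ ≤ G (ε / s) := by
            have h1r : 1 - r = δ * (2 - δ) := by rw [hrdef]; ring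
            have hle1 : δ * (1 - r)⁻¹ ≤ 1 := by
              rw [h1r, mul_inv, ← mul_assoc, mul_inv_cancel₀ hδ0.ne', one_mul]
              apply inv_le_one_of_one_le₀
              linarith
            exact mul_le_of_le_one_left (hGnonneg _) hle1
end
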